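/- Let h : [0,A²) → ℝ be continuous with primitive H, let E : [0,T] → ℝ³ be continuous, and let (X,V) : [0,T] → ℝ³×ℝ³ be a C¹ solution of Ẋ(t) = V(t), V̇(t) = E(t) + V(t) × B(X(t)), where B(x) = (h(x₂²+x₃²), 0, 0), such that r(t)² := X₂(t)² + X₃(t)² < A² for all t ∈ [0,T]. Then for every t ∈ [0,T]: (a) the pointwise identity h(r(t)²)(V₂(t)X₂(t) + V₃(t)X₃(t)) = V̇₂(t)X₃(t) − V̇₃(t)X₂(t) + X₂(t)E₃(t) − X₃(t)E₂(t) holds; (b) ½[H(r(t)²) − H(r(0)²)] = [V₂(t)X₃(t) − V₃(t)X₂(t)] − [V₂(0)X₃(0) − V₃(0)X₂(0)] + ∫₀ᵗ (X₂(s)E₃(s) − X₃(s)E₂(s)) ds; and consequently (c) H(r(t)²) ≤ H(r(0)²) + 4A sup_{s∈[0,t]} |V(s)| + 2A ∫₀ᵗ |E(s)| ds. -/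

import Mathlib

noncomputable section
open MeasureTheory Real Set

/-- Three-dimensional Euclidean space. -/
abbrev E3 : Type := EuclideanSpace ℝ (Fin 3)

/-- The cross product on `ℝ³`. -/
def cross3 (a b : E3) : E3 :=
  WithLp.toLp 2 ![a 1 * b 2 - a 2 * b 1, a 2 * b 0 - a 0 * b 2, a 0 * b 1 - a 1 * b 0]

/-- The open cylinder of radius `A` about the `x₁`-axis. -/
def cyl (A : ℝ) : Set E3 := {x : E3 | x 1 ^ 2 + x 2 ^ 2 < A ^ 2}

/-- The external magnetic field `B(x) = ((A² - (x₂²+x₃²))^{-θ}, 0, 0)`. -/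
def Bf (A θ : ℝ) (x : E3) : E3 := WithLp.toLp 2 ![(A ^ 2 - (x 1 ^ 2 + x 2 ^ 2)) ^ (-θ), 0, 0]

lemma hasDerivAt_comp3 {X : ℝ → E3} {v : E3} {t : ℝ} (hX : HasDerivAt X v t) (i : Fin 3) :
    HasDerivAt (fun s => X s i) (v i) t := by
  exact (EuclideanSpace.proj (𝕜 := ℝ) i).hasFDerivAt.comp_hasDerivAt t hX

lemma E3_comp_sq_le (v : E3) : v 1 ^ 2 + v 2 ^ 2 ≤ ‖v‖ ^ 2 := by
  have h : ‖v‖ ^ 2 = v 0 ^ 2 + (v 1 ^ 2 + v 2 ^ 2) := by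
    rw [EuclideanSpace.norm_eq, sq_sqrt (by positivity)]
    simp [Fin.sum_univ_three, Real.norm_eq_abs, sq_abs]
    ring
  nlinarith [sq_nonneg (v 0)]

lemma cs_aux (a b c d CA CV : ℝ) (hCA : 0 ≤ CA) (hCV : 0 ≤ CV)
    (h1 : a^2 + b^2 ≤ CV^2) (h2 : c^2 + d^2 ≤ CA^2) :
    |a * d - b * c| ≤ CA * CV := by
  have hm : (a^2 + b^2) * (c^2 + d^2) ≤ CV^2 * CA^2 :=
    mul_le_mul h1 h2 (by positivity) (by positivity)
  have key : (a*d - b*c)^2 ≤ (CA*CV)^2 := by nlinarith [sq_nonneg (a*c + b*d)]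
  calc |a*d - b*c| = Real.sqrt ((a*d - b*c)^2) := (Real.sqrt_sq_eq_abs _).symm
    _ ≤ Real.sqrt ((CA*CV)^2) := Real.sqrt_le_sqrt key
    _ = CA * CV := Real.sqrt_sq (by positivity)

/-- The identities behind the confinement estimate (eqns. (26)-(27) of the paper): for a C¹
solution of `Ẋ = V`, `V̇ = E(t) + V × B(X)` with `B(x) = (h(x₂²+x₃²),0,0)` staying in the
cylinder, one has the pointwise identity (a), the integrated identity (b), and the bound (c)
for a primitive `H` of `h`. -/
theorem confinement_identity
    (A T : ℝ) (hA : 0 < A) (hT : 0 < T)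
    (h H : ℝ → ℝ)
    (hh : ContinuousOn h (Ico 0 (A ^ 2)))
    (hH : ∀ u ∈ Ico (0:ℝ) (A ^ 2), HasDerivWithinAt H (h u) (Ico 0 (A ^ 2)) u)
    (eE : ℝ → E3) (heE : Continuous eE)
    (X V : ℝ → E3)
    (hX : ∀ t ∈ Icc (0:ℝ) T, HasDerivAt X (V t) t)
    (hV : ∀ t ∈ Icc (0:ℝ) T,
      HasDerivAt V (eE t + cross3 (V t) (WithLp.toLp 2 ![h (X t 1 ^ 2 + X t 2 ^ 2), 0, 0])) t)
    (hVcont : Continuous V)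
    (hconf : ∀ t ∈ Icc (0:ℝ) T, X t 1 ^ 2 + X t 2 ^ 2 < A ^ 2) :
    ∀ t ∈ Icc (0:ℝ) T,
      -- (a) pointwise identity
      (h (X t 1 ^ 2 + X t 2 ^ 2) * (V t 1 * X t 1 + V t 2 * X t 2) =
        (eE t + cross3 (V t) (WithLp.toLp 2 ![h (X t 1 ^ 2 + X t 2 ^ 2), 0, 0])) 1 * X t 2
          - (eE t + cross3 (V t) (WithLp.toLp 2 ![h (X t 1 ^ 2 + X t 2 ^ 2), 0, 0])) 2 * X t 1
          + X t 1 * eE t 2 - X t 2 * eE t 1) ∧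
      -- (b) integrated identity
      ((1/2) * (H (X t 1 ^ 2 + X t 2 ^ 2) - H (X 0 1 ^ 2 + X 0 2 ^ 2)) =
        (V t 1 * X t 2 - V t 2 * X t 1) - (V 0 1 * X 0 2 - V 0 2 * X 0 1)
          + ∫ s in (0:ℝ)..t, (X s 1 * eE s 2 - X s 2 * eE s 1)) ∧
      -- (c) consequence
      (H (X t 1 ^ 2 + X t 2 ^ 2) ≤ H (X 0 1 ^ 2 + X 0 2 ^ 2)
          + 4 * A * (⨆ s : Icc (0:ℝ) t, ‖V (s : ℝ)‖)
          + 2 * A * ∫ s in (0:ℝ)..t, ‖eE s‖) := by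
  -- part (a) for all times
  have ha : ∀ s ∈ Icc (0:ℝ) T,
      h (X s 1 ^ 2 + X s 2 ^ 2) * (V s 1 * X s 1 + V s 2 * X s 2) =
        (eE s + cross3 (V s) (WithLp.toLp 2 ![h (X s 1 ^ 2 + X s 2 ^ 2), 0, 0])) 1 * X s 2
          - (eE s + cross3 (V s) (WithLp.toLp 2 ![h (X s 1 ^ 2 + X s 2 ^ 2), 0, 0])) 2 * X s 1
          + X s 1 * eE s 2 - X s 2 * eE s 1 := by
    intro s hs
    simp [cross3]
    ring
  -- membership of r² in the domain of H
  have hmem : ∀ s ∈ Icc (0:ℝ) T, X s 1 ^ 2 + X s 2 ^ 2 ∈ Ico (0:ℝ) (A ^ 2) :=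
    fun s hs => ⟨by positivity, hconf s hs⟩
  -- derivative of r²
  have hr2d : ∀ s ∈ Icc (0:ℝ) T,
      HasDerivAt (fun u => X u 1 ^ 2 + X u 2 ^ 2)
        (2 * (X s 1 * V s 1 + X s 2 * V s 2)) s := by
    intro s hs
    have h1 := ((hasDerivAt_comp3 (hX s hs) 1).pow 2).add ((hasDerivAt_comp3 (hX s hs) 2).pow 2)
    convert (show HasDerivAt (fun u => X u 1 ^ 2 + X u 2 ^ 2) _ s from h1) using 1
    push_cast
    ring
  -- derivative of H ∘ r² within [0,T]
  have hphi : ∀ s ∈ Icc (0:ℝ) T,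
      HasDerivWithinAt (fun u => H (X u 1 ^ 2 + X u 2 ^ 2))
        (h (X s 1 ^ 2 + X s 2 ^ 2) * (2 * (X s 1 * V s 1 + X s 2 * V s 2))) (Icc 0 T) s := by
    intro s hs
    exact (hH _ (hmem s hs)).comp s ((hr2d s hs).hasDerivWithinAt) (fun u hu => hmem u hu)
  -- derivative of the angular-momentum-like term
  have hpsi : ∀ s ∈ Icc (0:ℝ) T,
      HasDerivAt (fun u => V u 1 * X u 2 - V u 2 * X u 1)
        ((eE s + cross3 (V s) (WithLp.toLp 2 ![h (X s 1 ^ 2 + X s 2 ^ 2), 0, 0])) 1 * X s 2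
          - (eE s + cross3 (V s) (WithLp.toLp 2 ![h (X s 1 ^ 2 + X s 2 ^ 2), 0, 0])) 2 * X s 1) s := by
    intro s hs
    have h1 := (hasDerivAt_comp3 (hV s hs) 1).mul (hasDerivAt_comp3 (hX s hs) 2)
    have h2 := (hasDerivAt_comp3 (hV s hs) 2).mul (hasDerivAt_comp3 (hX s hs) 1)
    convert (show HasDerivAt (fun u => V u 1 * X u 2 - V u 2 * X u 1) _ s from h1.sub h2) using 1
    simp [cross3]
    ring
  -- derivative of the combined function f
  have hf : ∀ s ∈ Icc (0:ℝ) T,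
      HasDerivWithinAt
        (fun u => (1/2) * H (X u 1 ^ 2 + X u 2 ^ 2) - (V u 1 * X u 2 - V u 2 * X u 1))
        (X s 1 * eE s 2 - X s 2 * eE s 1) (Icc 0 T) s := by
    intro s hs
    have hd := ((hphi s hs).const_mul (1/2 : ℝ)).sub ((hpsi s hs).hasDerivWithinAt)
    convert (show HasDerivWithinAt
        (fun u => (1/2) * H (X u 1 ^ 2 + X u 2 ^ 2) - (V u 1 * X u 2 - V u 2 * X u 1))
        _ (Icc 0 T) s from hd) using 1
    linear_combination -(ha s hs)
  -- continuity statements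
  have hfcont : ContinuousOn
      (fun u => (1/2) * H (X u 1 ^ 2 + X u 2 ^ 2) - (V u 1 * X u 2 - V u 2 * X u 1))
      (Icc 0 T) := fun s hs => (hf s hs).continuousWithinAt
  have hXcont : ContinuousOn X (Icc (0:ℝ) T) :=
    fun s hs => (hX s hs).continuousAt.continuousWithinAt
  have hXc : ∀ i : Fin 3, ContinuousOn (fun s => X s i) (Icc (0:ℝ) T) :=
    fun i => (EuclideanSpace.proj (𝕜 := ℝ) i).continuous.comp_continuousOn hXcont
  have heEc : ∀ i : Fin 3, Continuous fun s => eE s i :=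
    fun i => (EuclideanSpace.proj (𝕜 := ℝ) i).continuous.comp heE
  have hgcont : ContinuousOn (fun s => X s 1 * eE s 2 - X s 2 * eE s 1) (Icc (0:ℝ) T) :=
    ((hXc 1).mul (heEc 2).continuousOn).sub ((hXc 2).mul (heEc 1).continuousOn)
  -- main argument
  intro t ht
  have ht0 : (0:ℝ) ≤ t := ht.1
  have htT : t ≤ T := ht.2
  have hsubset : Icc (0:ℝ) t ⊆ Icc 0 T := Icc_subset_Icc le_rfl htT
  -- (b)
  have hFTC : (∫ s in (0:ℝ)..t, (X s 1 * eE s 2 - X s 2 * eE s 1)) =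
      ((1/2) * H (X t 1 ^ 2 + X t 2 ^ 2) - (V t 1 * X t 2 - V t 2 * X t 1))
      - ((1/2) * H (X 0 1 ^ 2 + X 0 2 ^ 2) - (V 0 1 * X 0 2 - V 0 2 * X 0 1)) := by
    apply intervalIntegral.integral_eq_sub_of_hasDeriv_right_of_le ht0
      (hfcont.mono hsubset)
    · intro x hx
      have hxT : x ∈ Icc (0:ℝ) T := hsubset (Ioo_subset_Icc_self hx)
      exact ((hf x hxT).hasDerivAt
        (Icc_mem_nhds hx.1 (lt_of_lt_of_le hx.2 htT))).hasDerivWithinAt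
    · exact (hgcont.mono hsubset).intervalIntegrable_of_Icc ht0
  have hb : (1/2) * (H (X t 1 ^ 2 + X t 2 ^ 2) - H (X 0 1 ^ 2 + X 0 2 ^ 2)) =
      (V t 1 * X t 2 - V t 2 * X t 1) - (V 0 1 * X 0 2 - V 0 2 * X 0 1)
        + ∫ s in (0:ℝ)..t, (X s 1 * eE s 2 - X s 2 * eE s 1) := by
    rw [hFTC]; ring
  refine ⟨ha t ht, hb, ?_⟩
  -- (c)
  have hnormV : ∀ s ∈ Icc (0:ℝ) T, |V s 1 * X s 2 - V s 2 * X s 1| ≤ A * ‖V s‖ :=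
    fun s hs => cs_aux (V s 1) (V s 2) (X s 1) (X s 2) A ‖V s‖ hA.le (norm_nonneg _)
      (E3_comp_sq_le (V s)) (hconf s hs).le
  have hgb : ∀ s ∈ Icc (0:ℝ) T, |X s 1 * eE s 2 - X s 2 * eE s 1| ≤ A * ‖eE s‖ := by
    intro s hs
    have := cs_aux (X s 1) (X s 2) (eE s 1) (eE s 2) ‖eE s‖ A (norm_nonneg _) hA.le
      (hconf s hs).le (E3_comp_sq_le (eE s))
    linarith [this]
  -- sup bound
  have hrange : (Set.range fun s : Icc (0:ℝ) t => ‖V (s:ℝ)‖) = (fun x => ‖V x‖) '' Icc 0 t := by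
    ext y
    simp [Set.mem_image]
  have hbdd : BddAbove (Set.range fun s : Icc (0:ℝ) t => ‖V (s:ℝ)‖) := by
    rw [hrange]
    exact isCompact_Icc.bddAbove_image hVcont.norm.continuousOn
  have hVt : ‖V t‖ ≤ ⨆ s : Icc (0:ℝ) t, ‖V (s:ℝ)‖ :=
    le_ciSup hbdd ⟨t, right_mem_Icc.2 ht0⟩
  have hV0 : ‖V 0‖ ≤ ⨆ s : Icc (0:ℝ) t, ‖V (s:ℝ)‖ :=
    le_ciSup hbdd ⟨0, left_mem_Icc.2 ht0⟩
  -- integral bound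
  have hint1 : IntervalIntegrable (fun s => X s 1 * eE s 2 - X s 2 * eE s 1) volume 0 t :=
    (hgcont.mono hsubset).intervalIntegrable_of_Icc ht0
  have hint2 : IntervalIntegrable (fun s => A * ‖eE s‖) volume 0 t :=
    (continuous_const.mul heE.norm).intervalIntegrable _ _
  have hIb : (∫ s in (0:ℝ)..t, (X s 1 * eE s 2 - X s 2 * eE s 1)) ≤
      ∫ s in (0:ℝ)..t, A * ‖eE s‖ :=
    intervalIntegral.integral_mono_on ht0 hint1 hint2
      (fun s hs => (le_abs_self _).trans (hgb s (hsubset hs)))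
  have hIc : (∫ s in (0:ℝ)..t, A * ‖eE s‖) = A * ∫ s in (0:ℝ)..t, ‖eE s‖ :=
    intervalIntegral.integral_const_mul _ _
  have hψt : V t 1 * X t 2 - V t 2 * X t 1 ≤ A * ‖V t‖ :=
    (le_abs_self _).trans (hnormV t ht)
  have hψ0 : -(V 0 1 * X 0 2 - V 0 2 * X 0 1) ≤ A * ‖V 0‖ :=
    (neg_le_abs _).trans (hnormV 0 (left_mem_Icc.2 hT.le))
  have hMt : A * ‖V t‖ ≤ A * ⨆ s : Icc (0:ℝ) t, ‖V (s:ℝ)‖ :=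
    mul_le_mul_of_nonneg_left hVt hA.le
  have hM0 : A * ‖V 0‖ ≤ A * ⨆ s : Icc (0:ℝ) t, ‖V (s:ℝ)‖ :=
    mul_le_mul_of_nonneg_left hV0 hA.le
  linarith [hb, hIb, hψt, hψ0, hMt, hM0, hIc.symm.le, hIc.le]
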